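/- The zero set of f(x₁, x₂) = x₂² − 4x₁³x₂ + x₁⁸ + 3x₁⁴ in the positive quadrant is exactly {(x₁, 2x₁³ ± x₁² √(1 − (x₁² − 2)²)) : 1 ≤ x₁ ≤ √3}, and this set is compact and nonempty. -/
import Mathlib


/-- The zero set of `f(x₁,x₂) = x₂² - 4x₁³x₂ + x₁⁸ + 3x₁⁴` in the positive
quadrant is exactly `{(x₁, 2x₁³ ± x₁²√(1-(x₁²-2)²)) : 1 ≤ x₁ ≤ √3}`, and this
set is compact and nonempty. -/
theorem explicit_compact_zero_set :
    {x : ℝ × ℝ | 0 < x.1 ∧ 0 < x.2 ∧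
        x.2 ^ 2 - 4 * x.1 ^ 3 * x.2 + x.1 ^ 8 + 3 * x.1 ^ 4 = 0}
      = {p : ℝ × ℝ | ∃ x₁ : ℝ, 1 ≤ x₁ ∧ x₁ ≤ Real.sqrt 3 ∧
          (p = (x₁, 2 * x₁ ^ 3 + x₁ ^ 2 * Real.sqrt (1 - (x₁ ^ 2 - 2) ^ 2)) ∨
           p = (x₁, 2 * x₁ ^ 3 - x₁ ^ 2 * Real.sqrt (1 - (x₁ ^ 2 - 2) ^ 2)))} ∧
    IsCompact {x : ℝ × ℝ | 0 < x.1 ∧ 0 < x.2 ∧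
        x.2 ^ 2 - 4 * x.1 ^ 3 * x.2 + x.1 ^ 8 + 3 * x.1 ^ 4 = 0} ∧
    {x : ℝ × ℝ | 0 < x.1 ∧ 0 < x.2 ∧
        x.2 ^ 2 - 4 * x.1 ^ 3 * x.2 + x.1 ^ 8 + 3 * x.1 ^ 4 = 0}.Nonempty := by
  have hset : {x : ℝ × ℝ | 0 < x.1 ∧ 0 < x.2 ∧
        x.2 ^ 2 - 4 * x.1 ^ 3 * x.2 + x.1 ^ 8 + 3 * x.1 ^ 4 = 0}
      = {p : ℝ × ℝ | ∃ x₁ : ℝ, 1 ≤ x₁ ∧ x₁ ≤ Real.sqrt 3 ∧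
          (p = (x₁, 2 * x₁ ^ 3 + x₁ ^ 2 * Real.sqrt (1 - (x₁ ^ 2 - 2) ^ 2)) ∨
           p = (x₁, 2 * x₁ ^ 3 - x₁ ^ 2 * Real.sqrt (1 - (x₁ ^ 2 - 2) ^ 2)))} := by
    ext ⟨a, b⟩
    simp only [Set.mem_setOf_eq]
    constructor
    · rintro ⟨ha, hb, heq⟩
      have ha4 : (0:ℝ) < a ^ 4 := by positivity
      have hsq : (b - 2 * a ^ 3) ^ 2 = a ^ 4 * (1 - (a ^ 2 - 2) ^ 2) := by nlinarith [heq]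
      have hD : 0 ≤ 1 - (a ^ 2 - 2) ^ 2 := by nlinarith [sq_nonneg (b - 2 * a ^ 3)]
      have ha2 : 1 ≤ a ^ 2 := by nlinarith [sq_nonneg (a ^ 2 - 1)]
      have h1 : 1 ≤ a := by
        by_contra hc
        push_neg at hc
        nlinarith [mul_pos ha (by linarith : (0:ℝ) < 1 - a)]
      have h3 : a ≤ Real.sqrt 3 := by
        rw [show a = Real.sqrt (a ^ 2) by rw [Real.sqrt_sq ha.le]]
        exact Real.sqrt_le_sqrt (by nlinarith)
      refine ⟨a, h1, h3, ?_⟩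
      have habs : |b - 2 * a ^ 3| = a ^ 2 * Real.sqrt (1 - (a ^ 2 - 2) ^ 2) := by
        rw [← Real.sqrt_sq_eq_abs, hsq, show a ^ 4 = (a ^ 2) ^ 2 by ring,
          Real.sqrt_mul (sq_nonneg _), Real.sqrt_sq (sq_nonneg a)]
      rcases abs_cases (b - 2 * a ^ 3) with ⟨h, _⟩ | ⟨h, _⟩
      · left
        rw [Prod.mk.injEq]
        constructor
        · rfl
        · linarith [habs.symm.trans h]
      · right
        rw [Prod.mk.injEq]
        constructor
        · rfl
        · linarith [habs.symm.trans h]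
    · rintro ⟨x₁, h1, h3, hp | hp⟩ <;>
      · obtain ⟨ha, hb⟩ := Prod.mk.injEq .. ▸ hp
        subst ha
        have h0 : (0:ℝ) ≤ a := by linarith
        have h3' : a ^ 2 ≤ 3 := by
          have := Real.sq_sqrt (by norm_num : (3:ℝ) ≥ 0)
          nlinarith [Real.sqrt_nonneg 3]
        have ha2 : 1 ≤ a ^ 2 := by nlinarith [sq_nonneg (a - 1)]
        have hD : 0 ≤ 1 - (a ^ 2 - 2) ^ 2 := by
          nlinarith [mul_nonneg (by linarith : (0:ℝ) ≤ a ^ 2 - 1)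
            (by linarith : (0:ℝ) ≤ 3 - a ^ 2)]
        have hs2 : Real.sqrt (1 - (a ^ 2 - 2) ^ 2) ^ 2 = 1 - (a ^ 2 - 2) ^ 2 :=
          Real.sq_sqrt hD
        have hsnn : 0 ≤ Real.sqrt (1 - (a ^ 2 - 2) ^ 2) := Real.sqrt_nonneg _
        have hs1 : Real.sqrt (1 - (a ^ 2 - 2) ^ 2) ≤ 1 := by nlinarith
        subst hb
        refine ⟨by linarith, by nlinarith, by linear_combination a ^ 4 * hs2⟩
  refine ⟨hset, ?_, ⟨(1, 2), by norm_num⟩⟩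
  rw [hset]
  have hc1 : Continuous fun x : ℝ =>
      (x, 2 * x ^ 3 + x ^ 2 * Real.sqrt (1 - (x ^ 2 - 2) ^ 2)) := by fun_prop
  have hc2 : Continuous fun x : ℝ =>
      (x, 2 * x ^ 3 - x ^ 2 * Real.sqrt (1 - (x ^ 2 - 2) ^ 2)) := by fun_prop
  have : {p : ℝ × ℝ | ∃ x₁ : ℝ, 1 ≤ x₁ ∧ x₁ ≤ Real.sqrt 3 ∧
          (p = (x₁, 2 * x₁ ^ 3 + x₁ ^ 2 * Real.sqrt (1 - (x₁ ^ 2 - 2) ^ 2)) ∨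
           p = (x₁, 2 * x₁ ^ 3 - x₁ ^ 2 * Real.sqrt (1 - (x₁ ^ 2 - 2) ^ 2)))}
      = ((fun x : ℝ => (x, 2 * x ^ 3 + x ^ 2 * Real.sqrt (1 - (x ^ 2 - 2) ^ 2))) ''
          Set.Icc 1 (Real.sqrt 3)) ∪
        ((fun x : ℝ => (x, 2 * x ^ 3 - x ^ 2 * Real.sqrt (1 - (x ^ 2 - 2) ^ 2))) ''
          Set.Icc 1 (Real.sqrt 3)) := by
    ext p
    simp only [Set.mem_setOf_eq, Set.mem_union, Set.mem_image, Set.mem_Icc]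
    constructor
    · rintro ⟨x₁, h1, h3, h | h⟩
      · exact Or.inl ⟨x₁, ⟨h1, h3⟩, h.symm⟩
      · exact Or.inr ⟨x₁, ⟨h1, h3⟩, h.symm⟩
    · rintro (⟨x₁, ⟨h1, h3⟩, h⟩ | ⟨x₁, ⟨h1, h3⟩, h⟩)
      · exact ⟨x₁, h1, h3, Or.inl h.symm⟩
      · exact ⟨x₁, h1, h3, Or.inr h.symm⟩
  rw [this]
  exact (isCompact_Icc.image hc1).union (isCompact_Icc.image hc2)
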